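/- Upper bound on the classical tumula information (Proposition 3): Let X and Y be nonempty finite types and P a probability distribution on X × Y. Then T(X:Y)_P ≤ Real.log (min (Fintype.card X) (Fintype.card Y)) (an inequality in [0,+∞]). In fact, T(X:Y)_P ≤ − Real.log (⨆ x, ∑ y, P (x,y)). -/

import Mathlib

open scoped BigOperators

noncomputable section

/-- A probability distribution on a finite type. -/
structure PDist (X : Type*) [Fintype X] where
  prob : X → ℝ
  nonneg : ∀ x, 0 ≤ prob x
  sum_one : ∑ x, prob x = 1

-- Classical relative entropy (Kullback–Leibler divergence), valued in `(-∞,∞]`.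
open Classical in
noncomputable def cDKL {X : Type*} [Fintype X] (P Q : X → ℝ) : EReal :=
  if ∀ x, Q x = 0 → P x = 0 then
    ((∑ x, if P x = 0 then (0 : ℝ) else P x * Real.log (P x / Q x) : ℝ) : EReal)
  else ⊤

/-- Classical tumula information of a joint probability mass function on `X × Y`. -/
noncomputable def cT {X Y : Type*} [Fintype X] [Fintype Y] (P : X × Y → ℝ) : EReal :=
  ⨅ (Q : PDist X) (R : PDist Y), cDKL (fun p => Q.prob p.1 * R.prob p.2) P

/-- A classical channel from `X` to `Y`. -/
structure Channel (X Y : Type*) [Fintype X] [Fintype Y] where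
  prob : X → Y → ℝ
  nonneg : ∀ x y, 0 ≤ prob x y
  sum_one : ∀ x, ∑ y, prob x y = 1

/-- Classical channel tumula information. -/
noncomputable def chT {X Y : Type*} [Fintype X] [Fintype Y] (W : Channel X Y) : EReal :=
  ⨆ P : PDist X, cT (fun p => P.prob p.1 * W.prob p.1 p.2)

open Classical in
lemma cT_le_neg_log_row {X Y : Type*} [Fintype X] [Fintype Y]
    (P : PDist (X × Y)) (x0 : X) (hs : 0 < ∑ y, P.prob (x0, y)) :
    cT P.prob ≤ ((-Real.log (∑ y, P.prob (x0, y)) : ℝ) : EReal) := by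
  set s0 := ∑ y, P.prob (x0, y) with hs0
  let Q : PDist X := ⟨fun x => if x = x0 then 1 else 0,
    fun x => by by_cases h : x = x0 <;> simp [h], by simp⟩
  let R : PDist Y := ⟨fun y => P.prob (x0, y) / s0,
    fun y => div_nonneg (P.nonneg _) hs.le,
    by rw [← Finset.sum_div, ← hs0, div_self hs.ne']⟩
  have h1 : cT P.prob ≤ cDKL (fun p => Q.prob p.1 * R.prob p.2) P.prob := by
    rw [cT]; exact iInf_le_of_le Q (iInf_le _ R)
  refine h1.trans ?_
  have hcond : ∀ p : X × Y, P.prob p = 0 → Q.prob p.1 * R.prob p.2 = 0 := by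
    rintro ⟨x, y⟩ hp
    by_cases hx : x = x0
    · subst hx; simp [Q, R, hp]
    · simp [Q, hx]
  rw [cDKL, if_pos hcond]
  rw [EReal.coe_le_coe_iff]
  have key : (∑ p : X × Y, if Q.prob p.1 * R.prob p.2 = 0 then (0 : ℝ)
      else Q.prob p.1 * R.prob p.2 * Real.log (Q.prob p.1 * R.prob p.2 / P.prob p))
      = -Real.log s0 := by
    rw [Fintype.sum_prod_type]
    rw [Finset.sum_eq_single x0]
    · have : ∀ y ∈ Finset.univ, (if Q.prob x0 * R.prob y = 0 then (0 : ℝ)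
          else Q.prob x0 * R.prob y * Real.log (Q.prob x0 * R.prob y / P.prob (x0, y)))
          = P.prob (x0, y) / s0 * (-Real.log s0) := by
        intro y _
        by_cases hy : P.prob (x0, y) = 0
        · simp [Q, R, hy]
        · have hQ : Q.prob x0 = 1 := by simp [Q]
          have hR : R.prob y = P.prob (x0, y) / s0 := rfl
          have hne : Q.prob x0 * R.prob y ≠ 0 := by
            rw [hQ, hR, one_mul]
            exact div_ne_zero hy hs.ne'
          rw [if_neg hne, hQ, hR, one_mul]
          have h2 : P.prob (x0, y) / s0 / P.prob (x0, y) = s0⁻¹ := by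
            field_simp
          rw [h2, Real.log_inv]
      rw [Finset.sum_congr rfl this]
      rw [← Finset.sum_mul, ← Finset.sum_div, ← hs0, div_self hs.ne', one_mul]
    · intro b _ hb
      apply Finset.sum_eq_zero
      intro y _
      simp [Q, hb]
    · intro h; exact absurd (Finset.mem_univ x0) h
  rw [key]

open Classical in
lemma cT_le_neg_log_col {X Y : Type*} [Fintype X] [Fintype Y]
    (P : PDist (X × Y)) (y0 : Y) (hs : 0 < ∑ x, P.prob (x, y0)) :
    cT P.prob ≤ ((-Real.log (∑ x, P.prob (x, y0)) : ℝ) : EReal) := by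
  set s0 := ∑ x, P.prob (x, y0) with hs0
  let Q : PDist X := ⟨fun x => P.prob (x, y0) / s0,
    fun x => div_nonneg (P.nonneg _) hs.le,
    by rw [← Finset.sum_div, ← hs0, div_self hs.ne']⟩
  let R : PDist Y := ⟨fun y => if y = y0 then 1 else 0,
    fun y => by by_cases h : y = y0 <;> simp [h], by simp⟩
  have h1 : cT P.prob ≤ cDKL (fun p => Q.prob p.1 * R.prob p.2) P.prob := by
    rw [cT]; exact iInf_le_of_le Q (iInf_le _ R)
  refine h1.trans ?_
  have hcond : ∀ p : X × Y, P.prob p = 0 → Q.prob p.1 * R.prob p.2 = 0 := by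
    rintro ⟨x, y⟩ hp
    by_cases hy : y = y0
    · subst hy; simp [Q, R, hp]
    · simp [R, hy]
  rw [cDKL, if_pos hcond]
  rw [EReal.coe_le_coe_iff]
  have key : (∑ p : X × Y, if Q.prob p.1 * R.prob p.2 = 0 then (0 : ℝ)
      else Q.prob p.1 * R.prob p.2 * Real.log (Q.prob p.1 * R.prob p.2 / P.prob p))
      = -Real.log s0 := by
    rw [Fintype.sum_prod_type_right]
    rw [Finset.sum_eq_single y0]
    · have : ∀ x ∈ Finset.univ, (if Q.prob x * R.prob y0 = 0 then (0 : ℝ)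
          else Q.prob x * R.prob y0 * Real.log (Q.prob x * R.prob y0 / P.prob (x, y0)))
          = P.prob (x, y0) / s0 * (-Real.log s0) := by
        intro x _
        by_cases hx : P.prob (x, y0) = 0
        · simp [Q, R, hx]
        · have hR : R.prob y0 = 1 := by simp [R]
          have hQ : Q.prob x = P.prob (x, y0) / s0 := rfl
          have hne : Q.prob x * R.prob y0 ≠ 0 := by
            rw [hQ, hR, mul_one]
            exact div_ne_zero hx hs.ne'
          rw [if_neg hne, hQ, hR, mul_one]
          have h2 : P.prob (x, y0) / s0 / P.prob (x, y0) = s0⁻¹ := by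
            field_simp
          rw [h2, Real.log_inv]
      rw [Finset.sum_congr rfl this]
      rw [← Finset.sum_mul, ← Finset.sum_div, ← hs0, div_self hs.ne', one_mul]
    · intro b _ hb
      apply Finset.sum_eq_zero
      intro x _
      simp [R, hb]
    · intro h; exact absurd (Finset.mem_univ y0) h
  rw [key]

lemma neg_log_le_log_card {n : ℕ} {s : ℝ} (hs : 0 < s)
    (h : 1 ≤ (n : ℝ) * s) : -Real.log s ≤ Real.log n := by
  rw [← Real.log_inv]
  apply Real.log_le_log (inv_pos.mpr hs)
  rw [inv_eq_one_div, div_le_iff₀ hs]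
  exact h

/-- Upper bound on the classical tumula information (Proposition 3). -/
theorem classical_tumula_le {X Y : Type*} [Fintype X] [Nonempty X] [Fintype Y] [Nonempty Y]
    (P : PDist (X × Y)) :
    cT P.prob ≤ ((Real.log (min (Fintype.card X) (Fintype.card Y)) : ℝ) : EReal) ∧
      cT P.prob ≤ ((-Real.log (⨆ x : X, ∑ y : Y, P.prob (x, y)) : ℝ) : EReal) := by
  -- row marginal maximizer
  obtain ⟨x0, hx0⟩ := Finite.exists_max (fun x : X => ∑ y, P.prob (x, y))
  obtain ⟨y0, hy0⟩ := Finite.exists_max (fun y : Y => ∑ x, P.prob (x, y))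
  have hsum : ∑ x, ∑ y, P.prob (x, y) = 1 := by
    rw [← Fintype.sum_prod_type]; exact P.sum_one
  have hsum' : ∑ y, ∑ x, P.prob (x, y) = 1 := by
    rw [Finset.sum_comm]; exact hsum
  have hcardX : (1 : ℝ) ≤ (Fintype.card X : ℝ) * ∑ y, P.prob (x0, y) := by
    calc (1 : ℝ) = ∑ x, ∑ y, P.prob (x, y) := hsum.symm
      _ ≤ ∑ _x : X, ∑ y, P.prob (x0, y) := Finset.sum_le_sum (fun x _ => hx0 x)
      _ = (Fintype.card X : ℝ) * ∑ y, P.prob (x0, y) := by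
          rw [Finset.sum_const, Finset.card_univ, nsmul_eq_mul]
  have hcardY : (1 : ℝ) ≤ (Fintype.card Y : ℝ) * ∑ x, P.prob (x, y0) := by
    calc (1 : ℝ) = ∑ y, ∑ x, P.prob (x, y) := hsum'.symm
      _ ≤ ∑ _y : Y, ∑ x, P.prob (x, y0) := Finset.sum_le_sum (fun y _ => hy0 y)
      _ = (Fintype.card Y : ℝ) * ∑ x, P.prob (x, y0) := by
          rw [Finset.sum_const, Finset.card_univ, nsmul_eq_mul]
  have hsx : 0 < ∑ y, P.prob (x0, y) := by
    by_contra h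
    push_neg at h
    have := hcardX.trans (mul_nonpos_of_nonneg_of_nonpos (Nat.cast_nonneg _) h)
    linarith
  have hsy : 0 < ∑ x, P.prob (x, y0) := by
    by_contra h
    push_neg at h
    have := hcardY.trans (mul_nonpos_of_nonneg_of_nonpos (Nat.cast_nonneg _) h)
    linarith
  have hrow := cT_le_neg_log_row P x0 hsx
  have hcol := cT_le_neg_log_col P y0 hsy
  have hsup : (⨆ x : X, ∑ y : Y, P.prob (x, y)) = ∑ y, P.prob (x0, y) :=
    le_antisymm (ciSup_le hx0) (le_ciSup (f := fun x : X => ∑ y, P.prob (x, y)) (Finite.bddAbove_range _) x0)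
  constructor
  · have hX : cT P.prob ≤ ((Real.log (Fintype.card X) : ℝ) : EReal) :=
      hrow.trans (EReal.coe_le_coe_iff.mpr
        (neg_log_le_log_card hsx hcardX))
    have hY : cT P.prob ≤ ((Real.log (Fintype.card Y) : ℝ) : EReal) :=
      hcol.trans (EReal.coe_le_coe_iff.mpr
        (neg_log_le_log_card hsy hcardY))
    rcases min_cases ((Fintype.card X : ℝ)) ((Fintype.card Y : ℝ)) with ⟨h1, _⟩ | ⟨h1, _⟩ <;>
      rw [h1]
    · exact hX
    · exact hY
  · rw [hsup]
    exact hrow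

end
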